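/- Let 𝔅 be a bornology with closed base on a metric space X. Then X satisfies S₁(𝒪_{𝔅ˢ}, Γ_{𝔅ˢ}) if and only if player ONE has no winning strategy in the game G₁(𝒪_{𝔅ˢ}, Γ_{𝔅ˢ}). -/

import Mathlib

open Set Metric Filter

/-- A bornology on a metric space: an ideal of subsets covering `X`. -/
structure BornologyOn (X : Type*) [MetricSpace X] where
  sets : Set (Set X)
  union_mem : ∀ {A B : Set X}, A ∈ sets → B ∈ sets → A ∪ B ∈ sets
  subset_mem : ∀ {A B : Set X}, A ∈ sets → B ⊆ A → B ∈ sets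
  covers : ∀ x : X, ∃ A ∈ sets, x ∈ A

variable {X : Type*} [MetricSpace X]

/-- `𝔅` has a closed base: a cofinal subfamily consisting of closed sets. -/
def HasClosedBase (𝔅 : BornologyOn X) : Prop :=
  ∃ base ⊆ 𝔅.sets, (∀ C ∈ base, IsClosed C) ∧ ∀ A ∈ 𝔅.sets, ∃ C ∈ base, A ⊆ C

/-- The `δ`-enlargement `B^δ = ⋃_{x ∈ B} S(x, δ)`. -/
def enlarge (B : Set X) (δ : ℝ) : Set X := ⋃ x ∈ B, ball x δ

/-- A `𝔅ˢ`-cover: `X ∉ 𝒰` and every `B ∈ 𝔅` has `B^δ ⊆ U` for some `U ∈ 𝒰`, `δ > 0`. -/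
def IsBCover (𝔅 : BornologyOn X) (𝒰 : Set (Set X)) : Prop :=
  univ ∉ 𝒰 ∧ ∀ B ∈ 𝔅.sets, ∃ U ∈ 𝒰, ∃ δ > 0, enlarge B δ ⊆ U

/-- An open `𝔅ˢ`-cover. -/
def IsOpenBCover (𝔅 : BornologyOn X) (𝒰 : Set (Set X)) : Prop :=
  (∀ U ∈ 𝒰, IsOpen U) ∧ (∀ x : X, ∃ U ∈ 𝒰, x ∈ U) ∧ IsBCover 𝔅 𝒰

/-- A `γ_{𝔅ˢ}`-cover (set form): infinite family of open sets such that for each `B ∈ 𝔅`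
all but finitely many members contain some enlargement of `B`. -/
def IsGammaBCover (𝔅 : BornologyOn X) (𝒰 : Set (Set X)) : Prop :=
  𝒰.Infinite ∧ (∀ U ∈ 𝒰, IsOpen U) ∧
    ∀ B ∈ 𝔅.sets, {U ∈ 𝒰 | ¬ ∃ δ > 0, enlarge B δ ⊆ U}.Finite

/-- A `γ_{𝔅ˢ}`-cover given as a sequence `{Uₙ}`: infinite, open, and for each `B ∈ 𝔅`
there are `n₀` and `δₙ > 0` with `B^{δₙ} ⊆ Uₙ` for all `n ≥ n₀`. -/
def IsGammaBSeq (𝔅 : BornologyOn X) (U : ℕ → Set X) : Prop :=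
  (Set.range U).Infinite ∧ (∀ n, IsOpen (U n)) ∧
    ∀ B ∈ 𝔅.sets, ∃ n₀, ∀ n ≥ n₀, ∃ δ > 0, enlarge B δ ⊆ U n

/-- A `γ`-cover: infinite family of open sets, every point in all but finitely many members. -/
def IsGammaCover (𝒰 : Set (Set X)) : Prop :=
  𝒰.Infinite ∧ (∀ U ∈ 𝒰, IsOpen U) ∧ ∀ x : X, {U ∈ 𝒰 | x ∉ U}.Finite

/-- An open cover of `X`. -/
def IsOpenCover (𝒰 : Set (Set X)) : Prop :=
  (∀ U ∈ 𝒰, IsOpen U) ∧ ∀ x : X, ∃ U ∈ 𝒰, x ∈ U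

/-- The family `𝒪_{𝔅ˢ}` of countable open `𝔅ˢ`-covers. -/
def OBs (𝔅 : BornologyOn X) : Set (Set (Set X)) :=
  {𝒰 | 𝒰.Countable ∧ IsOpenBCover 𝔅 𝒰}

/-- The family `Γ_{𝔅ˢ}` of countable `γ_{𝔅ˢ}`-covers. -/
def GBs (𝔅 : BornologyOn X) : Set (Set (Set X)) :=
  {𝒰 | 𝒰.Countable ∧ IsGammaBCover 𝔅 𝒰}

/-- The family `𝒪` of countable open covers. -/
def Ocov (X : Type*) [MetricSpace X] : Set (Set (Set X)) :=
  {𝒰 | 𝒰.Countable ∧ IsOpenCover 𝒰}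

/-- The selection principle `S₁(𝒜, ℬ)`. -/
def S1 (𝒜 ℬ : Set (Set (Set X))) : Prop :=
  ∀ 𝒰 : ℕ → Set (Set X), (∀ n, 𝒰 n ∈ 𝒜) →
    ∃ sel : ℕ → Set X, (∀ n, sel n ∈ 𝒰 n) ∧ Set.range sel ∈ ℬ

/-- The selection principle `S_fin(𝒜, ℬ)`. -/
def Sfin (𝒜 ℬ : Set (Set (Set X))) : Prop :=
  ∀ 𝒰 : ℕ → Set (Set X), (∀ n, 𝒰 n ∈ 𝒜) →
    ∃ 𝒱 : ℕ → Set (Set X), (∀ n, 𝒱 n ⊆ 𝒰 n ∧ (𝒱 n).Finite) ∧ (⋃ n, 𝒱 n) ∈ ℬ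

/-- The selection principle `U_fin(𝒜, ℬ)`. -/
def Ufin (𝒜 ℬ : Set (Set (Set X))) : Prop :=
  ∀ 𝒰 : ℕ → Set (Set X), (∀ n, 𝒰 n ∈ 𝒜) →
    ∃ 𝒱 : ℕ → Set (Set X), (∀ n, 𝒱 n ⊆ 𝒰 n ∧ (𝒱 n).Finite) ∧
      ((Set.range fun n => ⋃₀ 𝒱 n) ∈ ℬ ∨ ∃ n, ⋃₀ 𝒱 n = univ)

/-- ONE has a winning strategy in `G₁(𝒜, ℬ)`. -/
def OneWinsG1 (𝒜 ℬ : Set (Set (Set X))) : Prop :=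
  ∃ σ : List (Set X) → Set (Set X),
    (∀ h, σ h ∈ 𝒜) ∧
    ∀ play : ℕ → Set X,
      (∀ n, play n ∈ σ (List.ofFn fun i : Fin n => play i.1)) →
      Set.range play ∉ ℬ

/-- ONE has a winning strategy in `G_fin(𝒜, ℬ)`. -/
def OneWinsGfin (𝒜 ℬ : Set (Set (Set X))) : Prop :=
  ∃ σ : List (Set (Set X)) → Set (Set X),
    (∀ h, σ h ∈ 𝒜) ∧
    ∀ play : ℕ → Set (Set X),
      (∀ n, play n ⊆ σ (List.ofFn fun i : Fin n => play i.1) ∧ (play n).Finite) →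
      (⋃ n, play n) ∉ ℬ

/-- The winning condition in the `𝔅ˢ`-Hurewicz game / property: every `B ∈ 𝔅` is
eventually `δ`-enlarged into some member of `𝒱ₙ`. -/
def HurSel (𝔅 : BornologyOn X) (𝒱 : ℕ → Set (Set X)) : Prop :=
  ∀ B ∈ 𝔅.sets, ∃ n₀, ∀ n ≥ n₀, ∃ δ > 0, ∃ U ∈ 𝒱 n, enlarge B δ ⊆ U

/-- The strong `𝔅`-Hurewicz property. -/
def BsHurewicz (𝔅 : BornologyOn X) : Prop :=
  ∀ 𝒰 : ℕ → Set (Set X), (∀ n, 𝒰 n ∈ OBs 𝔅) →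
    ∃ 𝒱 : ℕ → Set (Set X), (∀ n, 𝒱 n ⊆ 𝒰 n ∧ (𝒱 n).Finite) ∧ HurSel 𝔅 𝒱

/-- ONE has a winning strategy in the `𝔅ˢ`-Hurewicz game. -/
def OneWinsHurewicz (𝔅 : BornologyOn X) : Prop :=
  ∃ σ : List (Set (Set X)) → Set (Set X),
    (∀ h, σ h ∈ OBs 𝔅) ∧
    ∀ play : ℕ → Set (Set X),
      (∀ n, play n ⊆ σ (List.ofFn fun i : Fin n => play i.1) ∧ (play n).Finite) →
      ¬ HurSel 𝔅 play

/-- A `𝔅ˢ`-groupable cover. -/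
def BsGroupable (𝔅 : BornologyOn X) (𝒰 : Set (Set X)) : Prop :=
  ∃ 𝒢 : ℕ → Set (Set X), (∀ n, (𝒢 n).Finite) ∧
    (∀ m n, m ≠ n → Disjoint (𝒢 m) (𝒢 n)) ∧ (⋃ n, 𝒢 n) = 𝒰 ∧ HurSel 𝔅 𝒢

/-- The family `𝒪_{𝔅ˢ}^{gp}` of `𝔅ˢ`-groupable open covers. -/
def OBsgp (𝔅 : BornologyOn X) : Set (Set (Set X)) :=
  {𝒰 | IsOpenCover 𝒰 ∧ BsGroupable 𝔅 𝒰}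

/-- The basic `τ_𝔅ˢ` neighbourhood `[B, ε]ˢ(f)` in `C(X)`. -/
def sball (f : C(X, ℝ)) (B : Set X) (ε : ℝ) : Set C(X, ℝ) :=
  {g | ∃ δ > 0, ∀ x ∈ enlarge B δ, |f x - g x| < ε}

/-- The topology `τ_𝔅ˢ` of strong uniform convergence on `𝔅` on `C(X)`. -/
def tauBs (𝔅 : BornologyOn X) : TopologicalSpace C(X, ℝ) :=
  TopologicalSpace.generateFrom
    {S | ∃ f : C(X, ℝ), ∃ B ∈ 𝔅.sets, ∃ ε > 0, S = sball f B ε}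

/-- Countable `T`-tightness of a topological space. -/
def CountableTTightness {Y : Type*} (t : TopologicalSpace Y) : Prop :=
  ∀ ρ : Cardinal.{0}, ρ.IsRegular → Cardinal.aleph0 < ρ →
    ∀ A : Ordinal.{0} → Set Y, (∀ α β, α ≤ β → A α ⊆ A β) →
      (∀ α, α < ρ.ord → @IsClosed _ t (A α)) →
      @IsClosed _ t (⋃ α ∈ {α | α < ρ.ord}, A α)

/-! ### Auxiliary lemmas for `stmt12` -/

lemma singleton_mem_aux (𝔅 : BornologyOn X) (x : X) : {x} ∈ 𝔅.sets := by
  obtain ⟨A, hA, hx⟩ := 𝔅.covers x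
  exact 𝔅.subset_mem hA (by simpa using hx)

lemma union_finite_mem_aux (𝔅 : BornologyOn X) {B D : Set X} (hB : B ∈ 𝔅.sets)
    (hD : D.Finite) : B ∪ D ∈ 𝔅.sets := by
  refine Set.Finite.induction_on (motive := fun D _ => B ∪ D ∈ 𝔅.sets) D hD (by simpa using hB) ?_
  intro a s _ _ ih
  have : B ∪ insert a s = {a} ∪ (B ∪ s) := by
    ext y; simp [or_comm, or_assoc, or_left_comm]
  rw [this]
  exact 𝔅.union_mem (singleton_mem_aux 𝔅 a) ih

lemma enlarge_mono_aux {B B' : Set X} (h : B ⊆ B') (δ : ℝ) :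
    enlarge B δ ⊆ enlarge B' δ := by
  intro y hy
  simp only [enlarge, mem_iUnion] at hy ⊢
  obtain ⟨x, hx, hxy⟩ := hy
  exact ⟨x, h hx, hxy⟩

lemma self_subset_enlarge_aux {B : Set X} {δ : ℝ} (hδ : 0 < δ) :
    B ⊆ enlarge B δ := by
  intro x hx
  simp only [enlarge, mem_iUnion]
  exact ⟨x, hx, mem_ball_self hδ⟩

/-- Removing finitely many sets from a countable open `𝔅ˢ`-cover gives a
countable open `𝔅ˢ`-cover. -/
lemma obs_diff_aux (𝔅 : BornologyOn X) [Nonempty X] {𝒰 F : Set (Set X)} (h𝒰 : 𝒰 ∈ OBs 𝔅)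
    (hF : F.Finite) : 𝒰 \ F ∈ OBs 𝔅 := by
  obtain ⟨hcnt, hopen, hpoint, huniv, hB⟩ := h𝒰
  have hne : ∀ U ∈ F ∩ 𝒰, ∃ x, x ∉ U := by
    intro U hU
    have : U ≠ univ := fun h => huniv (h ▸ hU.2)
    exact Set.ne_univ_iff_exists_notMem U |>.mp this
  choose! pt hpt using hne
  set D : Set X := pt '' (F ∩ 𝒰) with hD
  have hDfin : D.Finite := (hF.inter_of_left 𝒰).image pt
  have key : ∀ B ∈ 𝔅.sets, ∃ U ∈ 𝒰 \ F, ∃ δ > 0, enlarge B δ ⊆ U := by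
    intro B hBmem
    have hB' : B ∪ D ∈ 𝔅.sets := union_finite_mem_aux 𝔅 hBmem hDfin
    obtain ⟨U, hU, δ, hδ, hsub⟩ := hB (B ∪ D) hB'
    refine ⟨U, ⟨hU, ?_⟩, δ, hδ, fun y hy =>
      hsub (enlarge_mono_aux subset_union_left δ hy)⟩
    intro hUF
    have hptU : pt U ∈ D := ⟨U, ⟨hUF, hU⟩, rfl⟩
    exact hpt U ⟨hUF, hU⟩ (hsub (self_subset_enlarge_aux hδ (Or.inr hptU)))
  refine ⟨hcnt.mono diff_subset, fun U hU => hopen U hU.1, ?_,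
    fun h => huniv h.1, key⟩
  intro x
  obtain ⟨U, hU, δ, hδ, hsub⟩ := key {x} (singleton_mem_aux 𝔅 x)
  exact ⟨U, hU, hsub (self_subset_enlarge_aux hδ rfl)⟩

/-- A countable open `𝔅ˢ`-cover of a nonempty space is infinite. -/
lemma obs_infinite_aux (𝔅 : BornologyOn X) [Nonempty X] {𝒰 : Set (Set X)}
    (h𝒰 : 𝒰 ∈ OBs 𝔅) : 𝒰.Infinite := by
  intro hfin
  obtain ⟨hcnt, hopen, hpoint, huniv, hB⟩ := h𝒰
  have hne : ∀ U ∈ 𝒰, ∃ x, x ∉ U := by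
    intro U hU
    have : U ≠ univ := fun h => huniv (h ▸ hU)
    exact Set.ne_univ_iff_exists_notMem U |>.mp this
  choose! pt hpt using hne
  set D : Set X := pt '' 𝒰 with hD
  have hDfin : D.Finite := hfin.image pt
  obtain ⟨x⟩ := ‹Nonempty X›
  have hDmem : D ∈ 𝔅.sets := by
    have := union_finite_mem_aux 𝔅 (𝔅.subset_mem (singleton_mem_aux 𝔅 x)
      (Set.empty_subset _)) hDfin
    simpa using this
  obtain ⟨U, hU, δ, hδ, hsub⟩ := hB D hDmem
  exact hpt U hU (hsub (self_subset_enlarge_aux hδ ⟨U, hU, rfl⟩))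

/-- The histories arising from a move function. -/
def histAux (E : List (Set X) → ℕ → Set X) : List ℕ → List (Set X)
  | [] => []
  | k :: s => histAux E s ++ [E (histAux E s) k]

theorem stmt12 (𝔅 : BornologyOn X) (hcb : HasClosedBase 𝔅)
    (hX : Set.univ ∉ 𝔅.sets) :
    S1 (OBs 𝔅) (GBs 𝔅) ↔ ¬ OneWinsG1 (OBs 𝔅) (GBs 𝔅) := by
  constructor
  · -- hard direction: S1 implies ONE has no winning strategy
    intro hS1 ⟨σ, hσ, hwin⟩
    -- the space is nonempty
    by_cases hneX : Nonempty X
    case neg =>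
      obtain ⟨sel, hsel1, _⟩ := hS1 (fun _ => σ []) (fun _ => hσ [])
      have : sel 0 = univ := by
        ext x; exact absurd ⟨x⟩ hneX
      exact (hσ []).2.2.2.1 (this ▸ hsel1 0)
    -- the pruned covers
    set C : List (Set X) → Set (Set X) := fun l => σ l \ {U | U ∈ l} with hC
    have hCobs : ∀ l, C l ∈ OBs 𝔅 := fun l =>
      obs_diff_aux 𝔅 (hσ l) (List.finite_toSet l)
    have hCne : ∀ l, (C l).Nonempty := fun l =>
      (obs_infinite_aux 𝔅 (hCobs l)).nonempty
    have hCenum : ∀ l, ∃ f : ℕ → Set X, C l = Set.range f := fun l =>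
      ((hCobs l).1).exists_eq_range (hCne l)
    choose E hE using hCenum
    -- apply S1 to the countably many pruned covers indexed by nodes
    obtain ⟨sel, hsel1, hsel2⟩ := hS1
      (fun n => C (histAux E (Denumerable.ofNat (List ℕ) n)))
      (fun n => hCobs _)
    set V : List ℕ → Set X := fun s => sel (Encodable.encode s) with hV
    have hVC : ∀ s : List ℕ, V s ∈ C (histAux E s) := by
      intro s
      have := hsel1 (Encodable.encode s)
      rwa [Denumerable.ofNat_encode] at this
    have hVrange : ∀ s : List ℕ, V s ∈ Set.range sel := fun s =>
      ⟨Encodable.encode s, rfl⟩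
    have hK : ∀ s : List ℕ, ∃ k, E (histAux E s) k = V s := by
      intro s
      have := hVC s
      rw [hE (histAux E s)] at this
      exact this
    choose K hKspec using hK
    -- the branch
    set g : ℕ → List ℕ := fun n => Nat.rec [] (fun _ ih => K ih :: ih) n with hg
    set play : ℕ → Set X := fun n => V (g n) with hplay
    have hgsucc : ∀ n, g (n + 1) = K (g n) :: g n := fun n => rfl
    have hhist : ∀ n, histAux E (g n) = List.ofFn (fun i : Fin n => play i.1) := by
      intro n
      induction n with
      | zero => show histAux E [] = _; simp [histAux]
      | succ n ih =>
        rw [hgsucc, histAux, hKspec, ih]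
        rw [List.ofFn_succ']
        simp [List.concat_eq_append, hplay]
    have hlegal : ∀ n, play n ∈ σ (List.ofFn fun i : Fin n => play i.1) := by
      intro n
      rw [← hhist]
      exact (hVC (g n)).1
    have hnotmem : ∀ n, play n ∉ histAux E (g n) := fun n => (hVC (g n)).2
    have hinj : Function.Injective play := by
      have hlt : ∀ m n, m < n → play m ≠ play n := by
        intro m n hmn heq
        apply hnotmem n
        rw [hhist n, List.mem_ofFn]
        exact ⟨⟨m, hmn⟩, heq⟩
      intro m n heq
      rcases lt_trichotomy m n with h | h | h
      · exact absurd heq (hlt m n h)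
      · exact h
      · exact absurd heq.symm (hlt n m h)
    -- the range of play is a γ_{𝔅ˢ}-cover
    obtain ⟨hrcnt, hrinf, hropen, hrfin⟩ := hsel2
    refine hwin play hlegal ⟨Set.countable_range play, ?_, ?_, ?_⟩
    · exact Set.infinite_range_of_injective hinj
    · intro U hU
      obtain ⟨n, rfl⟩ := hU
      exact hropen _ (hVrange (g n))
    · intro B hB
      refine (hrfin B hB).subset ?_
      rintro U ⟨⟨n, rfl⟩, hbad⟩
      exact ⟨hVrange (g n), hbad⟩
  · -- easy direction
    intro hno 𝒰 h𝒰
    by_contra hS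
    apply hno
    refine ⟨fun h => 𝒰 h.length, fun h => h𝒰 _, ?_⟩
    intro play hplay hrange
    exact hS ⟨play, fun n => by simpa using hplay n, hrange⟩
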